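/- Let x¹, x² : [0,∞) → ℝ be continuous functions, let f ∈ C_b^∞(ℝ²), set g = ∂₁₂₂f, fix t ≥ 0, and set ρ(k) = (1/2)(|k+1|^{1/3} + |k−1|^{1/3} − 2|k|^{1/3}) for k ∈ ℤ (i.e. ρ = ρ_H with H = 1/6). For n ≥ 1 and j ∈ ℕ write m_j = (((x¹_{(j+1)2^{−n/2}} + x¹_{j2^{−n/2}})/2), ((x²_{(j+1)2^{−n/2}} + x²_{j2^{−n/2}})/2)). Then, as n → ∞, (1/32)·2^{−n/2}·Σ_{j,k=0}^{⌊2^{n/2}t⌋−1} g(m_j)·g(m_k)·ρ(j−k)³ converges to κ₃² · ∫₀ᵗ g(x¹_s, x²_s)² ds, where κ₃² = (1/32) Σ_{r∈ℤ} ρ(r)³. -/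

import Mathlib

open Filter Topology

noncomputable section

/-- `ρ_H(k) = (1/2)(|k+1|^{2H} + |k−1|^{2H} − 2|k|^{2H})`. -/
def rhoH (H : ℝ) (k : ℤ) : ℝ :=
  (|(k : ℝ) + 1| ^ (2 * H) + |(k : ℝ) - 1| ^ (2 * H) - 2 * |(k : ℝ)| ^ (2 * H)) / 2

/-- `g` is infinitely differentiable and bounded together with all its derivatives. -/
def CbSmooth {E : Type*} [NormedAddCommGroup E] [NormedSpace ℝ E] (g : E → ℝ) : Prop :=
  (∀ n : ℕ, ContDiff ℝ n g) ∧
  ∀ k : ℕ, ∃ M : ℝ, ∀ x : E, ‖iteratedFDeriv ℝ k g x‖ ≤ M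

/-- `f : ℝ² → ℝ` (in curried form) belongs to `C_b^∞(ℝ²)`. -/
def CbSmooth2 (f : ℝ → ℝ → ℝ) : Prop :=
  CbSmooth fun p : ℝ × ℝ => f p.1 p.2

/-- Partial derivative of `f : ℝ → ℝ → ℝ`, taken `k` times in the first variable and `l` times
in the second variable. -/
def pd (k l : ℕ) (f : ℝ → ℝ → ℝ) (x y : ℝ) : ℝ :=
  iteratedDeriv k (fun u => iteratedDeriv l (fun v => f u v) y) x

/-- The dyadic point `j·2^{−n/2}`. -/
def dyadicPt (n j : ℕ) : ℝ := (j : ℝ) * (2 : ℝ) ^ (-(n : ℝ) / 2)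

/-- The number of dyadic steps `⌊2^{n/2} t⌋`. -/
def nSteps (n : ℕ) (t : ℝ) : ℕ := Nat.floor ((2 : ℝ) ^ ((n : ℝ) / 2) * t)





lemma cbSmooth_fderiv_apply {F : ℝ × ℝ → ℝ} (hF : CbSmooth F) (v : ℝ × ℝ) :
    CbSmooth (fun p => fderiv ℝ F p v) := by
  have hEq : (fun p => fderiv ℝ F p v)
      = (ContinuousLinearMap.apply ℝ ℝ v) ∘ (fderiv ℝ F) := rfl
  have hd : ∀ n : ℕ, ContDiff ℝ n (fderiv ℝ F) := by
    intro n
    exact (hF.1 (n+1)).fderiv_right (by exact_mod_cast le_refl ((n:ℕ∞)+1))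
  constructor
  · intro n
    rw [hEq]
    exact (ContinuousLinearMap.apply ℝ ℝ v).contDiff.comp (hd n)
  · intro k
    obtain ⟨M, hM⟩ := hF.2 (k+1)
    refine ⟨‖ContinuousLinearMap.apply ℝ ℝ v‖ * M, fun x => ?_⟩
    rw [hEq, ContinuousLinearMap.iteratedFDeriv_comp_left _ (hd k).contDiffAt le_rfl]
    calc ‖(ContinuousLinearMap.apply ℝ ℝ v).compContinuousMultilinearMap
          (iteratedFDeriv ℝ k (fderiv ℝ F) x)‖
        ≤ ‖ContinuousLinearMap.apply ℝ ℝ v‖ * ‖iteratedFDeriv ℝ k (fderiv ℝ F) x‖ :=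
          ContinuousLinearMap.norm_compContinuousMultilinearMap_le _ _
      _ ≤ ‖ContinuousLinearMap.apply ℝ ℝ v‖ * M := by
          rw [norm_iteratedFDeriv_fderiv]
          exact mul_le_mul_of_nonneg_left (hM x) (by positivity)

lemma cbSmooth_bound {E : Type*} [NormedAddCommGroup E] [NormedSpace ℝ E] {g : E → ℝ}
    (hg : CbSmooth g) : ∃ M : ℝ, 0 ≤ M ∧ ∀ x, |g x| ≤ M := by
  obtain ⟨M, hM⟩ := hg.2 0
  refine ⟨M, le_trans (norm_nonneg _) (hM 0), fun x => ?_⟩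
  have := hM x
  rwa [norm_iteratedFDeriv_zero] at this

lemma deriv_snd {F : ℝ × ℝ → ℝ} (hF : Differentiable ℝ F) (u y : ℝ) :
    deriv (fun v => F (u, v)) y = fderiv ℝ F (u, y) (0, 1) := by
  have h1 : HasDerivAt (fun v : ℝ => (u, v)) ((0:ℝ), (1:ℝ)) y := by
    simpa using ((hasDerivAt_const y u).prodMk (hasDerivAt_id y))
  exact ((hF (u, y)).hasFDerivAt.comp_hasDerivAt y h1).deriv

lemma deriv_fst {F : ℝ × ℝ → ℝ} (hF : Differentiable ℝ F) (x y : ℝ) :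
    deriv (fun u => F (u, y)) x = fderiv ℝ F (x, y) (1, 0) := by
  have h1 : HasDerivAt (fun u : ℝ => (u, y)) ((1:ℝ), (0:ℝ)) x := by
    simpa using ((hasDerivAt_id x).prodMk (hasDerivAt_const x y))
  exact ((hF (x, y)).hasFDerivAt.comp_hasDerivAt x h1).deriv



lemma cbSmooth_differentiable {E : Type*} [NormedAddCommGroup E] [NormedSpace ℝ E] {g : E → ℝ}
    (hg : CbSmooth g) : Differentiable ℝ g :=
  (hg.1 1).differentiable (by simp)

/-- uncurried version of `pd 1 2 f`. -/
def psi (f : ℝ → ℝ → ℝ) : ℝ × ℝ → ℝ :=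
  fun p => fderiv ℝ (fun q => fderiv ℝ (fun q' => fderiv ℝ (fun p' : ℝ × ℝ => f p'.1 p'.2) q' (0,1)) q (0,1)) p (1,0)

lemma cbSmooth_psi {f : ℝ → ℝ → ℝ} (hf : CbSmooth2 f) : CbSmooth (psi f) :=
  cbSmooth_fderiv_apply (cbSmooth_fderiv_apply (cbSmooth_fderiv_apply hf _) _) _

lemma pd12_eq {f : ℝ → ℝ → ℝ} (hf : CbSmooth2 f) (x y : ℝ) :
    pd 1 2 f x y = psi f (x, y) := by
  set F : ℝ × ℝ → ℝ := fun p => f p.1 p.2 with hFdef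
  set F1 : ℝ × ℝ → ℝ := fun q => fderiv ℝ F q (0,1) with hF1
  set F2 : ℝ × ℝ → ℝ := fun q => fderiv ℝ F1 q (0,1) with hF2
  have hFd : Differentiable ℝ F := cbSmooth_differentiable hf
  have hF1s : CbSmooth F1 := cbSmooth_fderiv_apply hf _
  have hF2s : CbSmooth F2 := cbSmooth_fderiv_apply hF1s _
  have hF1d : Differentiable ℝ F1 := cbSmooth_differentiable hF1s
  have hF2d : Differentiable ℝ F2 := cbSmooth_differentiable hF2s
  have hinner : ∀ u : ℝ, (fun y' => iteratedDeriv 2 (fun v => f u v) y') = fun y' => F2 (u, y') := by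
    intro u
    funext y'
    rw [iteratedDeriv_succ, iteratedDeriv_one]
    have e1 : deriv (fun v => f u v) = fun w => F1 (u, w) := by
      funext w
      exact deriv_snd hFd u w
    rw [e1]
    exact deriv_snd hF1d u y'
  have : pd 1 2 f x y = deriv (fun u => F2 (u, y)) x := by
    unfold pd
    rw [iteratedDeriv_one]
    congr 1
    funext u
    rw [congrFun (hinner u) y]
  rw [this, deriv_fst hF2d x y]
  rfl


lemma rhoH_neg (H : ℝ) (k : ℤ) : rhoH H (-k) = rhoH H k := by
  unfold rhoH
  push_cast
  rw [show -(k:ℝ) + 1 = -((k:ℝ) - 1) by ring, show -(k:ℝ) - 1 = -((k:ℝ) + 1) by ring,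
    abs_neg, abs_neg, abs_neg]
  ring

set_option maxHeartbeats 1000000 in
lemma rho_real_bound (K : ℝ) (hK : 2 ≤ K) :
    |(|K + 1| ^ ((1:ℝ)/3) + |K - 1| ^ ((1:ℝ)/3) - 2 * |K| ^ ((1:ℝ)/3)) / 2|
      ≤ 1 / (3 * (K - 1) ^ ((2:ℝ)/3)) := by
  have h1 : (0:ℝ) ≤ K - 1 := by linarith
  have h1' : (0:ℝ) < K - 1 := by linarith
  have h0 : (0:ℝ) ≤ K := by linarith
  have h2 : (0:ℝ) ≤ K + 1 := by linarith
  rw [abs_of_nonneg h2, abs_of_nonneg h1, abs_of_nonneg h0]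
  set A : ℝ := (K+1) ^ ((1:ℝ)/3) with hA
  set B : ℝ := (K-1) ^ ((1:ℝ)/3) with hB
  set C : ℝ := K ^ ((1:ℝ)/3) with hC
  have hA0 : 0 ≤ A := Real.rpow_nonneg h2 _
  have hBpos : 0 < B := Real.rpow_pos_of_pos h1' _
  have hB0 : 0 ≤ B := hBpos.le
  have hC0 : 0 ≤ C := Real.rpow_nonneg h0 _
  have hBC : B ≤ C := Real.rpow_le_rpow h1 (by linarith) (by norm_num)
  have hCA : C ≤ A := Real.rpow_le_rpow h0 (by linarith) (by norm_num)
  have cube : ∀ x : ℝ, 0 ≤ x → (x ^ ((1:ℝ)/3)) ^ (3:ℕ) = x := by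
    intro x hx
    rw [← Real.rpow_natCast (x ^ ((1:ℝ)/3)) 3, ← Real.rpow_mul hx]
    norm_num
  have hA3 : A ^ (3:ℕ) = K + 1 := cube _ h2
  have hB3 : B ^ (3:ℕ) = K - 1 := cube _ h1
  have hC3 : C ^ (3:ℕ) = K := cube _ h0
  have hB2pos : (0:ℝ) < 3 * B ^ (2:ℕ) := by positivity
  have hfAC : (A - C) * (A^2 + A*C + C^2) = 1 := by
    have : A^(3:ℕ) - C^(3:ℕ) = 1 := by rw [hA3, hC3]; ring
    nlinarith [this]
  have hfCB : (C - B) * (C^2 + C*B + B^2) = 1 := by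
    have : C^(3:ℕ) - B^(3:ℕ) = 1 := by rw [hC3, hB3]; ring
    nlinarith [this]
  have hsq1 : B*B ≤ A*C := mul_le_mul (hBC.trans hCA) hBC hB0 hA0
  have hsq2 : B*B ≤ C*C := mul_le_mul hBC hBC hB0 hC0
  have hsq3 : B*B ≤ A*A := mul_le_mul (hBC.trans hCA) (hBC.trans hCA) hB0 hA0
  have up1 : 3 * B^(2:ℕ) * (A - C) ≤ 1 := by
    nlinarith [mul_le_mul_of_nonneg_right
      (by nlinarith : 3 * B^(2:ℕ) ≤ A^2 + A*C + C^2) (sub_nonneg.2 hCA)]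
  have up2 : 3 * B^(2:ℕ) * (C - B) ≤ 1 := by
    nlinarith [mul_le_mul_of_nonneg_right
      (by nlinarith : 3 * B^(2:ℕ) ≤ C^2 + C*B + B^2) (sub_nonneg.2 hBC)]
  have dn1 : 0 ≤ 3 * B^(2:ℕ) * (A - C) :=
    mul_nonneg hB2pos.le (sub_nonneg.2 hCA)
  have dn2 : 0 ≤ 3 * B^(2:ℕ) * (C - B) :=
    mul_nonneg hB2pos.le (sub_nonneg.2 hBC)
  have hBsq : B ^ (2:ℕ) = (K - 1) ^ ((2:ℝ)/3) := by
    rw [hB, ← Real.rpow_natCast ((K-1) ^ ((1:ℝ)/3)) 2, ← Real.rpow_mul h1]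
    norm_num
  rw [abs_le, ← hBsq]
  constructor
  · rw [neg_le, ← neg_div, div_le_div_iff₀ (by norm_num : (0:ℝ) < 2) hB2pos]
    nlinarith [up2, dn1]
  · rw [div_le_div_iff₀ (by norm_num : (0:ℝ) < 2) hB2pos]
    nlinarith [up1, dn2]

lemma rhoH_bound (k : ℕ) (hk : 2 ≤ k) :
    |rhoH (1/6) (k : ℤ)| ≤ 1 / (3 * ((k:ℝ) - 1) ^ ((2:ℝ)/3)) := by
  have h := rho_real_bound (k : ℝ) (by exact_mod_cast hk)
  have : rhoH (1/6) (k : ℤ)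
      = (|(k:ℝ) + 1| ^ ((1:ℝ)/3) + |(k:ℝ) - 1| ^ ((1:ℝ)/3) - 2 * |(k:ℝ)| ^ ((1:ℝ)/3)) / 2 := by
    unfold rhoH
    norm_num
  rw [this]
  exact h

lemma rhoH_cube_bound (n : ℕ) :
    |rhoH (1/6) ((n:ℤ) + 2)| ^ (3:ℕ) ≤ 1 / ((n:ℝ) + 1) ^ (2:ℕ) := by
  have h := rhoH_bound (n + 2) (by omega)
  have hcast : ((n + 2 : ℕ) : ℤ) = (n:ℤ) + 2 := by push_cast; ring
  rw [hcast] at h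
  have h1 : ((n+2:ℕ):ℝ) - 1 = (n:ℝ) + 1 := by push_cast; ring
  rw [h1] at h
  have habs : (0:ℝ) ≤ |rhoH (1/6) ((n:ℤ) + 2)| := abs_nonneg _
  have h3 : |rhoH (1/6) ((n:ℤ) + 2)| ^ (3:ℕ) ≤ (1 / (3 * ((n:ℝ)+1) ^ ((2:ℝ)/3))) ^ (3:ℕ) :=
    pow_le_pow_left₀ habs h 3
  refine h3.trans ?_
  rw [div_pow, one_pow, mul_pow]
  have hc : (((n:ℝ)+1) ^ ((2:ℝ)/3)) ^ (3:ℕ) = ((n:ℝ)+1) ^ (2:ℕ) := by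
    rw [← Real.rpow_natCast (((n:ℝ)+1) ^ ((2:ℝ)/3)) 3, ← Real.rpow_mul (by positivity),
      ← Real.rpow_natCast ((n:ℝ)+1) 2]
    norm_num
  rw [hc]
  have h27 : (0:ℝ) < ((n:ℝ)+1)^(2:ℕ) := by positivity
  rw [div_le_div_iff₀ (by positivity) h27]
  nlinarith [h27]

lemma summable_rho_cube_nat : Summable (fun n : ℕ => |rhoH (1/6) (n:ℤ)| ^ (3:ℕ)) := by
  rw [← summable_nat_add_iff 2]
  have hb : Summable (fun n : ℕ => 1 / ((n:ℝ) + 1) ^ (2:ℕ)) := by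
    have := (Real.summable_one_div_nat_pow (p := 2)).2 (by norm_num)
    rw [← summable_nat_add_iff 1] at this
    simpa using this
  refine Summable.of_nonneg_of_le (fun n => by positivity) (fun n => ?_) hb
  have := rhoH_cube_bound n
  simpa [add_comm] using this

lemma summable_rho_cube_abs : Summable (fun r : ℤ => |rhoH (1/6) r| ^ (3:ℕ)) := by
  apply Summable.of_nat_of_neg
  · exact summable_rho_cube_nat
  · simpa only [rhoH_neg] using summable_rho_cube_nat



def dstep (n : ℕ) : ℝ := (2 : ℝ) ^ (-(n : ℝ) / 2)

lemma dstep_pos (n : ℕ) : 0 < dstep n := Real.rpow_pos_of_pos (by norm_num) _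

lemma dstep_mul (n : ℕ) : (2:ℝ) ^ ((n:ℝ)/2) * dstep n = 1 := by
  unfold dstep
  rw [← Real.rpow_add (by norm_num : (0:ℝ) < 2), show (n:ℝ)/2 + -(n:ℝ)/2 = 0 by ring,
    Real.rpow_zero]

lemma nSteps_mul_le (n : ℕ) {t : ℝ} (ht : 0 ≤ t) : (nSteps n t : ℝ) * dstep n ≤ t := by
  have h1 : (nSteps n t : ℝ) ≤ (2:ℝ) ^ ((n:ℝ)/2) * t :=
    Nat.floor_le (by positivity)
  calc (nSteps n t : ℝ) * dstep n ≤ ((2:ℝ) ^ ((n:ℝ)/2) * t) * dstep n :=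
        mul_le_mul_of_nonneg_right h1 (dstep_pos n).le
    _ = t * ((2:ℝ) ^ ((n:ℝ)/2) * dstep n) := by ring
    _ = t := by rw [dstep_mul]; ring

lemma lt_nSteps_succ_mul (n : ℕ) (t : ℝ) : t < ((nSteps n t : ℝ) + 1) * dstep n := by
  have h1 : (2:ℝ) ^ ((n:ℝ)/2) * t < (nSteps n t : ℝ) + 1 := Nat.lt_floor_add_one _
  have h2 := dstep_pos n
  have := mul_lt_mul_of_pos_right h1 h2
  calc t = ((2:ℝ) ^ ((n:ℝ)/2) * t) * dstep n := by
        rw [mul_comm ((2:ℝ) ^ ((n:ℝ)/2)) t, mul_assoc, dstep_mul]; ring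
    _ < ((nSteps n t : ℝ) + 1) * dstep n := this

lemma dstep_tendsto : Tendsto dstep atTop (𝓝 0) := by
  have heq : dstep = fun n : ℕ => ((2:ℝ) ^ (-(1:ℝ)/2)) ^ n := by
    funext n
    rw [← Real.rpow_natCast ((2:ℝ) ^ (-(1:ℝ)/2)) n, ← Real.rpow_mul (by norm_num : (0:ℝ) ≤ 2)]
    unfold dstep
    congr 1
    ring
  rw [heq]
  apply tendsto_pow_atTop_nhds_zero_of_lt_one
  · positivity
  · exact Real.rpow_lt_one_of_one_lt_of_neg (by norm_num) (by norm_num)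

lemma dyadicPt_eq (n j : ℕ) : dyadicPt n j = (j : ℝ) * dstep n := rfl

def midpt (x1 x2 : ℝ → ℝ) (n j : ℕ) : ℝ × ℝ :=
  ((x1 (dyadicPt n (j+1)) + x1 (dyadicPt n j)) / 2,
   (x2 (dyadicPt n (j+1)) + x2 (dyadicPt n j)) / 2)

def stepA (ψ : ℝ × ℝ → ℝ) (x1 x2 : ℝ → ℝ) (t : ℝ) (n : ℕ) (m : ℤ) : ℝ :=
  if 0 ≤ m ∧ m < (nSteps n t : ℤ) then ψ (midpt x1 x2 n m.toNat) else 0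

set_option maxHeartbeats 2000000 in
lemma pointwise_conv (ψ : ℝ × ℝ → ℝ) (hψ : Continuous ψ) (M : ℝ) (hM : ∀ p, |ψ p| ≤ M)
    (x1 x2 : ℝ → ℝ) (hx1 : ContinuousOn x1 (Set.Ici 0)) (hx2 : ContinuousOn x2 (Set.Ici 0))
    (t : ℝ) (ht : 0 ≤ t) (r : ℤ) :
    Tendsto (fun n => dstep n * ∑ j ∈ Finset.range (nSteps n t),
        ψ (midpt x1 x2 n j) * stepA ψ x1 x2 t n ((j : ℤ) - r)) atTop
      (𝓝 (∫ u in (0:ℝ)..t, (ψ (x1 u, x2 u)) ^ 2)) := by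
  have hM0 : 0 ≤ M := (abs_nonneg _).trans (hM 0)
  set H : ℝ → ℝ := fun u => (ψ (x1 u, x2 u)) ^ 2 with hH
  have hHcont : ContinuousOn H (Set.Ici 0) :=
    (hψ.comp_continuousOn (hx1.prodMk hx2)).pow 2
  have hHbd : ∀ u : ℝ, ‖H u‖ ≤ (M+1)^2 := by
    intro u
    have h1 := hM (x1 u, x2 u)
    have h2 := abs_nonneg (ψ (x1 u, x2 u))
    rw [hH, Real.norm_eq_abs, abs_pow]
    nlinarith
  have hHint : ∀ a b : ℝ, 0 ≤ a → 0 ≤ b → IntervalIntegrable H MeasureTheory.volume a b := by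
    intro a b ha hb
    refine (hHcont.mono ?_).intervalIntegrable
    intro x hx
    rcases Set.mem_uIcc.1 hx with ⟨h, _⟩ | ⟨h, _⟩
    · exact le_trans ha h
    · exact le_trans hb h
  rw [Metric.tendsto_atTop]
  intro ε hε
  obtain ⟨C1, hC1⟩ := isCompact_Icc.exists_bound_of_continuousOn
    (hx1.mono (Set.Icc_subset_Ici_self (a := t) (b := (0:ℝ))))
  obtain ⟨C2, hC2⟩ := isCompact_Icc.exists_bound_of_continuousOn
    (hx2.mono (Set.Icc_subset_Ici_self (a := t) (b := (0:ℝ))))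
  set R : ℝ := max C1 C2 with hR
  have hxR : ∀ s ∈ Set.Icc (0:ℝ) t, |x1 s| ≤ R ∧ |x2 s| ≤ R := by
    intro s hs
    constructor
    · exact le_trans (by simpa [Real.norm_eq_abs] using hC1 s hs) (le_max_left _ _)
    · exact le_trans (by simpa [Real.norm_eq_abs] using hC2 s hs) (le_max_right _ _)
  set B : Set (ℝ × ℝ) := Set.Icc (-R) R ×ˢ Set.Icc (-R) R with hB
  have hBc : IsCompact B := isCompact_Icc.prod isCompact_Icc
  have hucψ := hBc.uniformContinuousOn_of_continuous hψ.continuousOn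
  rw [Metric.uniformContinuousOn_iff] at hucψ
  set ε₀ : ℝ := ε / (8 * (M+1) * (t+1)) with hε₀
  have hε₀pos : 0 < ε₀ := by positivity
  obtain ⟨η₁, hη₁pos, hη₁⟩ := hucψ ε₀ hε₀pos
  have hucx1 := isCompact_Icc.uniformContinuousOn_of_continuous
    (hx1.mono (Set.Icc_subset_Ici_self (a := t) (b := (0:ℝ))))
  rw [Metric.uniformContinuousOn_iff] at hucx1
  obtain ⟨η₂, hη₂pos, hη₂⟩ := hucx1 η₁ hη₁pos
  have hucx2 := isCompact_Icc.uniformContinuousOn_of_continuous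
    (hx2.mono (Set.Icc_subset_Ici_self (a := t) (b := (0:ℝ))))
  rw [Metric.uniformContinuousOn_iff] at hucx2
  obtain ⟨η₃, hη₃pos, hη₃⟩ := hucx2 η₁ hη₁pos
  set η : ℝ := min η₂ η₃ with hηdef
  have hηpos : 0 < η := lt_min hη₂pos hη₃pos
  have hev : ∀ᶠ n in atTop, ((r.natAbs : ℝ) + 1) * dstep n < η ∧
      dstep n * ((4 * (r.natAbs : ℝ) + 1) * (M+1)^2) < ε/2 := by
    have h1 : Tendsto (fun n => ((r.natAbs : ℝ) + 1) * dstep n) atTop (𝓝 0) := by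
      simpa using dstep_tendsto.const_mul ((r.natAbs : ℝ) + 1)
    have h2 : Tendsto (fun n => dstep n * ((4 * (r.natAbs : ℝ) + 1) * (M+1)^2)) atTop (𝓝 0) := by
      simpa using dstep_tendsto.mul_const ((4 * (r.natAbs : ℝ) + 1) * (M+1)^2)
    filter_upwards [h1.eventually_lt_const hηpos, h2.eventually_lt_const (by positivity : (0:ℝ) < ε/2)]
      with n ha hb
    exact ⟨ha, hb⟩
  obtain ⟨n₀, hn₀⟩ := eventually_atTop.1 hev
  refine ⟨n₀, fun n hn => ?_⟩
  obtain ⟨hsmall, hhalf⟩ := hn₀ n hn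
  set N : ℕ := nSteps n t with hN
  set d : ℝ := dstep n with hdd
  have hdpos : 0 < d := dstep_pos n
  have hNd : (N:ℝ) * d ≤ t := nSteps_mul_le n ht
  have hNd2 : t < ((N:ℝ) + 1) * d := lt_nSteps_succ_mul n t
  have hpt : ∀ j : ℕ, dyadicPt n j = (j:ℝ) * d := fun j => rfl
  have hptmem : ∀ j : ℕ, j ≤ N → dyadicPt n j ∈ Set.Icc (0:ℝ) t := by
    intro j hj
    rw [hpt]
    constructor
    · exact mul_nonneg (Nat.cast_nonneg j) hdpos.le
    · calc (j:ℝ)*d ≤ (N:ℝ)*d := by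
            apply mul_le_mul_of_nonneg_right _ hdpos.le
            exact_mod_cast hj
        _ ≤ t := hNd
  have hadj : ∀ k < N, IntervalIntegrable H MeasureTheory.volume (dyadicPt n k) (dyadicPt n (k+1)) := by
    intro k hk
    exact hHint _ _ (hptmem k hk.le).1 (hptmem (k+1) hk).1
  have hsplit1 := intervalIntegral.sum_integral_adjacent_intervals hadj
  have h00 : dyadicPt n 0 = 0 := by simp [dyadicPt]
  have haNmem := hptmem N le_rfl
  have hsplit2 := intervalIntegral.integral_add_adjacent_intervals
    (hHint 0 (dyadicPt n N) le_rfl haNmem.1) (hHint (dyadicPt n N) t haNmem.1 ht)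
  -- closeness helper
  have hrabs : ((r.natAbs : ℝ)) = |(r:ℝ)| := by
    rw [Nat.cast_natAbs, Int.cast_abs]
  have hclose : ∀ k : ℕ, k + 1 ≤ N → ∀ s ∈ Set.Icc (0:ℝ) t,
      |dyadicPt n k - s| < η → |dyadicPt n (k+1) - s| < η →
      |ψ (midpt x1 x2 n k) - ψ (x1 s, x2 s)| < ε₀ := by
    intro k hk s hsmem h1 h2
    have hk1 := hptmem k (by omega)
    have hk2 := hptmem (k+1) hk
    have hb1 := (hxR _ hk1).1
    have hb2 := (hxR _ hk2).1
    have hb3 := (hxR _ hk1).2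
    have hb4 := (hxR _ hk2).2
    have hbs1 := (hxR _ hsmem).1
    have hbs2 := (hxR _ hsmem).2
    have hm1 : midpt x1 x2 n k ∈ B := by
      rw [hB]
      refine Set.mem_prod.2 ⟨?_, ?_⟩
      · unfold midpt
        simp only
        rw [Set.mem_Icc]
        rw [abs_le] at hb1 hb2
        exact ⟨by linarith only [hb1.1, hb2.1], by linarith only [hb1.2, hb2.2]⟩
      · unfold midpt
        simp only
        rw [Set.mem_Icc]
        rw [abs_le] at hb3 hb4
        exact ⟨by linarith only [hb3.1, hb4.1], by linarith only [hb3.2, hb4.2]⟩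
    have hq : ((x1 s, x2 s) : ℝ × ℝ) ∈ B := by
      rw [hB]
      refine Set.mem_prod.2 ⟨?_, ?_⟩
      · rw [Set.mem_Icc]; rw [abs_le] at hbs1; exact hbs1
      · rw [Set.mem_Icc]; rw [abs_le] at hbs2; exact hbs2
    have hd1 : |x1 (dyadicPt n k) - x1 s| < η₁ := by
      have := hη₂ (dyadicPt n k) hk1 s hsmem
        (by rw [Real.dist_eq]; exact lt_of_lt_of_le h1 (min_le_left _ _))
      rwa [Real.dist_eq] at this
    have hd2 : |x1 (dyadicPt n (k+1)) - x1 s| < η₁ := by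
      have := hη₂ (dyadicPt n (k+1)) hk2 s hsmem
        (by rw [Real.dist_eq]; exact lt_of_lt_of_le h2 (min_le_left _ _))
      rwa [Real.dist_eq] at this
    have hd3 : |x2 (dyadicPt n k) - x2 s| < η₁ := by
      have := hη₃ (dyadicPt n k) hk1 s hsmem
        (by rw [Real.dist_eq]; exact lt_of_lt_of_le h1 (min_le_right _ _))
      rwa [Real.dist_eq] at this
    have hd4 : |x2 (dyadicPt n (k+1)) - x2 s| < η₁ := by
      have := hη₃ (dyadicPt n (k+1)) hk2 s hsmem
        (by rw [Real.dist_eq]; exact lt_of_lt_of_le h2 (min_le_right _ _))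
      rwa [Real.dist_eq] at this
    have hdistpair : dist (midpt x1 x2 n k) ((x1 s, x2 s) : ℝ × ℝ) < η₁ := by
      rw [Prod.dist_eq]
      apply max_lt
      · rw [Real.dist_eq]
        unfold midpt
        simp only
        rw [abs_lt] at hd1 hd2 ⊢
        exact ⟨by linarith only [hd1.1, hd2.1], by linarith only [hd1.2, hd2.2]⟩
      · rw [Real.dist_eq]
        unfold midpt
        simp only
        rw [abs_lt] at hd3 hd4 ⊢
        exact ⟨by linarith only [hd3.1, hd4.1], by linarith only [hd3.2, hd4.2]⟩
    have := hη₁ _ hm1 _ hq hdistpair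
    rwa [Real.dist_eq] at this
  -- per-j estimate
  have hperj : ∀ j ∈ Finset.range N,
      |d * (ψ (midpt x1 x2 n j) * stepA ψ x1 x2 t n ((j:ℤ) - r))
        - ∫ u in dyadicPt n j..dyadicPt n (j+1), H u|
      ≤ d * (2*(M+1)*ε₀)
        + (if 0 ≤ (j:ℤ) - r ∧ (j:ℤ) - r < (N:ℤ) then 0 else d * (2*(M+1)^2)) := by
    intro j hj
    rw [Finset.mem_range] at hj
    have hj0 : (0:ℝ) ≤ dyadicPt n j := (hptmem j hj.le).1
    have hjt : dyadicPt n (j+1) ≤ t := (hptmem (j+1) hj).2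
    have hstep : dyadicPt n (j+1) - dyadicPt n j = d := by
      rw [hpt, hpt]; push_cast; ring
    have hle : dyadicPt n j ≤ dyadicPt n (j+1) := by linarith only [hstep, hdpos]
    have habs : |dyadicPt n (j+1) - dyadicPt n j| = d := by
      rw [hstep, abs_of_pos hdpos]
    have hsmem : ∀ s ∈ Set.uIoc (dyadicPt n j) (dyadicPt n (j+1)),
        s ∈ Set.Icc (0:ℝ) t ∧ dyadicPt n j < s ∧ s ≤ dyadicPt n (j+1) := by
      intro s hs
      rw [Set.uIoc_of_le hle] at hs
      exact ⟨⟨hj0.trans hs.1.le, hs.2.trans hjt⟩, hs.1, hs.2⟩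
    have hHj := hHint (dyadicPt n j) (dyadicPt n (j+1)) hj0 (hptmem (j+1) hj).1
    set cj : ℝ := ψ (midpt x1 x2 n j) * stepA ψ x1 x2 t n ((j:ℤ) - r) with hcj
    have hconst : d * cj = ∫ u in dyadicPt n j..dyadicPt n (j+1), cj := by
      rw [intervalIntegral.integral_const, smul_eq_mul, hstep]
    have hsub : d * cj - (∫ u in dyadicPt n j..dyadicPt n (j+1), H u)
        = ∫ u in dyadicPt n j..dyadicPt n (j+1), (cj - H u) := by
      rw [hconst, ← intervalIntegral.integral_sub intervalIntegrable_const hHj]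
    by_cases hgood : 0 ≤ (j:ℤ) - r ∧ (j:ℤ) - r < (N:ℤ)
    · rw [if_pos hgood, add_zero]
      set k' : ℕ := ((j:ℤ) - r).toNat with hk'def
      have hk'cast : ((k' : ℤ)) = (j:ℤ) - r := Int.toNat_of_nonneg hgood.1
      have hk'real : ((k' : ℝ)) = (j:ℝ) - (r:ℝ) := by exact_mod_cast hk'cast
      have hk'N : k' + 1 ≤ N := by omega
      have hA : stepA ψ x1 x2 t n ((j:ℤ) - r) = ψ (midpt x1 x2 n k') := by
        unfold stepA
        rw [if_pos]
        exact hgood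
      have hrd1 : (r:ℝ) * d ≤ |(r:ℝ)| * d :=
        mul_le_mul_of_nonneg_right (le_abs_self _) hdpos.le
      have hrd2 : -(|(r:ℝ)| * d) ≤ (r:ℝ) * d := by
        have := mul_le_mul_of_nonneg_right (neg_abs_le (r:ℝ)) hdpos.le
        linarith
      have hsm : (|(r:ℝ)| + 1) * d < η := by
        rw [← hrabs]
        exact hsmall
      have hbd : ∀ s ∈ Set.uIoc (dyadicPt n j) (dyadicPt n (j+1)),
          ‖cj - H s‖ ≤ 2*(M+1)*ε₀ := by
        intro s hs
        obtain ⟨hsIcc, hs1, hs2⟩ := hsmem s hs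
        have hjd : dyadicPt n j = (j:ℝ) * d := hpt j
        have hjd1 : dyadicPt n (j+1) = ((j:ℝ)+1) * d := by rw [hpt]; push_cast; ring
        have hdle : d ≤ (|(r:ℝ)| + 1) * d := by
          have h9 : 0 ≤ |(r:ℝ)| * d := mul_nonneg (abs_nonneg _) hdpos.le
          linarith only [h9]
        have ht1 : |dyadicPt n j - s| < η := by
          rw [abs_lt]
          exact ⟨by linarith only [hs1, hs2, hstep, hdle, hsm],
            by linarith only [hs1, hs2, hstep, hdle, hsm]⟩
        have ht2 : |dyadicPt n (j+1) - s| < η := by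
          rw [abs_lt]
          exact ⟨by linarith only [hs1, hs2, hstep, hdle, hsm],
            by linarith only [hs1, hs2, hstep, hdle, hsm]⟩
        have hclose1 := hclose j hj s hsIcc ht1 ht2
        have htk1 : |dyadicPt n k' - s| < η := by
          rw [hpt, hk'real, abs_lt]
          rw [hjd] at hs1
          rw [hjd1] at hs2
          exact ⟨by linarith only [hs1, hs2, hrd1, hrd2, hsm, hdpos],
            by linarith only [hs1, hs2, hrd1, hrd2, hsm, hdpos]⟩
        have htk2 : |dyadicPt n (k'+1) - s| < η := by
          rw [hpt, abs_lt]
          push_cast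
          rw [hk'real]
          rw [hjd] at hs1
          rw [hjd1] at hs2
          exact ⟨by linarith only [hs1, hs2, hrd1, hrd2, hsm, hdpos],
            by linarith only [hs1, hs2, hrd1, hrd2, hsm, hdpos]⟩
        have hclose2 := hclose k' hk'N s hsIcc htk1 htk2
        rw [hcj, hA, Real.norm_eq_abs, hH]
        set u1 : ℝ := ψ (midpt x1 x2 n j)
        set u2 : ℝ := ψ (midpt x1 x2 n k')
        set v : ℝ := ψ (x1 s, x2 s)
        have hident : u1 * u2 - v^2 = u1 * (u2 - v) + v * (u1 - v) := by ring
        calc |u1 * u2 - v^2| = |u1 * (u2 - v) + v * (u1 - v)| := by rw [hident]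
          _ ≤ |u1 * (u2 - v)| + |v * (u1 - v)| := abs_add_le _ _
          _ = |u1| * |u2 - v| + |v| * |u1 - v| := by rw [abs_mul, abs_mul]
          _ ≤ M * ε₀ + M * ε₀ := by
              apply add_le_add
              · exact mul_le_mul (hM _) hclose2.le (abs_nonneg _) hM0
              · exact mul_le_mul (hM _) hclose1.le (abs_nonneg _) hM0
          _ ≤ 2*(M+1)*ε₀ := by linarith only [hε₀pos]
      calc |d * cj - ∫ u in dyadicPt n j..dyadicPt n (j+1), H u|
          = ‖∫ u in dyadicPt n j..dyadicPt n (j+1), (cj - H u)‖ := by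
            rw [hsub, Real.norm_eq_abs]
        _ ≤ 2*(M+1)*ε₀ * |dyadicPt n (j+1) - dyadicPt n j| :=
            intervalIntegral.norm_integral_le_of_norm_le_const hbd
        _ = d * (2*(M+1)*ε₀) := by rw [habs]; ring
    · rw [if_neg hgood]
      have hA0 : stepA ψ x1 x2 t n ((j:ℤ) - r) = 0 := by
        unfold stepA
        rw [if_neg]
        exact hgood
      have hcj0 : cj = 0 := by rw [hcj, hA0, mul_zero]
      have hbd : ∀ s ∈ Set.uIoc (dyadicPt n j) (dyadicPt n (j+1)), ‖H s‖ ≤ (M+1)^2 :=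
        fun s _ => hHbd s
      calc |d * cj - ∫ u in dyadicPt n j..dyadicPt n (j+1), H u|
          = ‖∫ u in dyadicPt n j..dyadicPt n (j+1), H u‖ := by
            rw [hcj0, mul_zero, zero_sub, Real.norm_eq_abs, abs_neg]
        _ ≤ (M+1)^2 * |dyadicPt n (j+1) - dyadicPt n j| :=
            intervalIntegral.norm_integral_le_of_norm_le_const hbd
        _ = (M+1)^2 * d := by rw [habs]
        _ ≤ d * (2*(M+1)*ε₀) + d * (2*(M+1)^2) := by
            have e1 : 0 ≤ d * (2*(M+1)*ε₀) := by positivity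
            have e2 : 0 ≤ (M+1)^2 * d := by positivity
            linarith only [e1, e2]

  -- assembly
  have hdecomp : d * (∑ j ∈ Finset.range N, ψ (midpt x1 x2 n j) * stepA ψ x1 x2 t n ((j:ℤ) - r))
      - ∫ u in (0:ℝ)..t, H u
      = (∑ j ∈ Finset.range N,
          (d * (ψ (midpt x1 x2 n j) * stepA ψ x1 x2 t n ((j:ℤ) - r))
            - ∫ u in dyadicPt n j..dyadicPt n (j+1), H u))
        - ∫ u in dyadicPt n N..t, H u := by
    rw [Finset.sum_sub_distrib, ← Finset.mul_sum, hsplit1, h00, ← hsplit2]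
    ring
  have habs_sub : ∀ a b : ℝ, |a - b| ≤ |a| + |b| := fun a b => by
    rw [sub_eq_add_neg]
    exact (abs_add_le _ _).trans_eq (by rw [abs_neg])
  have htail : |∫ u in dyadicPt n N..t, H u| ≤ (M+1)^2 * d := by
    have h1 : ‖∫ u in dyadicPt n N..t, H u‖ ≤ (M+1)^2 * |t - dyadicPt n N| :=
      intervalIntegral.norm_integral_le_of_norm_le_const (fun s _ => hHbd s)
    have h2 : |t - dyadicPt n N| ≤ d := by
      rw [hpt, abs_of_nonneg (by linarith only [hNd] : (0:ℝ) ≤ t - (N:ℝ)*d)]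
      linarith only [hNd2]
    rw [← Real.norm_eq_abs]
    exact h1.trans (mul_le_mul_of_nonneg_left h2 (by positivity))
  have hmain : ∑ j ∈ Finset.range N, |d * (ψ (midpt x1 x2 n j) * stepA ψ x1 x2 t n ((j:ℤ) - r))
        - ∫ u in dyadicPt n j..dyadicPt n (j+1), H u|
      ≤ t * (2*(M+1)*ε₀) + (2*(r.natAbs:ℝ)) * (d * (2*(M+1)^2)) := by
    refine (Finset.sum_le_sum hperj).trans ?_
    rw [Finset.sum_add_distrib, Finset.sum_const, Finset.card_range, nsmul_eq_mul]
    have hA : (N:ℝ) * (d * (2*(M+1)*ε₀)) ≤ t * (2*(M+1)*ε₀) := by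
      rw [← mul_assoc]
      exact mul_le_mul_of_nonneg_right hNd (by positivity)
    have hB : (∑ j ∈ Finset.range N,
          if 0 ≤ (j:ℤ) - r ∧ (j:ℤ) - r < (N:ℤ) then (0:ℝ) else d * (2*(M+1)^2))
        ≤ (2*(r.natAbs:ℝ)) * (d * (2*(M+1)^2)) := by
      have heq : (∑ j ∈ Finset.range N,
            if 0 ≤ (j:ℤ) - r ∧ (j:ℤ) - r < (N:ℤ) then (0:ℝ) else d * (2*(M+1)^2))
          = ∑ j ∈ (Finset.range N).filter
              (fun j : ℕ => ¬(0 ≤ (j:ℤ) - r ∧ (j:ℤ) - r < (N:ℤ))), d * (2*(M+1)^2) := by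
        rw [Finset.sum_filter]
        refine Finset.sum_congr rfl (fun j _ => ?_)
        by_cases h : 0 ≤ (j:ℤ) - r ∧ (j:ℤ) - r < (N:ℤ)
        · rw [if_pos h, if_neg (not_not_intro h)]
        · rw [if_neg h, if_pos h]
      rw [heq, Finset.sum_const, nsmul_eq_mul]
      have hcard2 : (((Finset.range N).filter
            (fun j : ℕ => ¬(0 ≤ (j:ℤ) - r ∧ (j:ℤ) - r < (N:ℤ)))).card : ℝ) ≤ 2*(r.natAbs:ℝ) := by
        have hsub : (Finset.range N).filter (fun j : ℕ => ¬(0 ≤ (j:ℤ) - r ∧ (j:ℤ) - r < (N:ℤ)))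
            ⊆ Finset.range r.natAbs ∪ Finset.Ico (N - r.natAbs) N := by
          intro j hj
          simp only [Finset.mem_filter, Finset.mem_range, Finset.mem_union, Finset.mem_Ico] at hj ⊢
          omega
        have hc := (Finset.card_le_card hsub).trans (Finset.card_union_le _ _)
        rw [Finset.card_range, Nat.card_Ico] at hc
        have h2 : ((Finset.range N).filter
            (fun j : ℕ => ¬(0 ≤ (j:ℤ) - r ∧ (j:ℤ) - r < (N:ℤ)))).card ≤ 2 * r.natAbs := by omega
        exact_mod_cast h2
      exact mul_le_mul_of_nonneg_right hcard2 (by positivity)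
    linarith only [hA, hB]
  rw [Real.dist_eq, hdecomp]
  have hq1 : t * (2*(M+1)*ε₀) ≤ ε/4 := by
    have hqa : 2*(M+1)*(t+1)*ε₀ = ε/4 := by
      rw [hε₀]; field_simp; ring
    have m1 : 0 ≤ M*ε₀ := mul_nonneg hM0 hε₀pos.le
    linarith only [hqa, m1, hε₀pos]
  have hq2 : (2*(r.natAbs:ℝ)) * (d * (2*(M+1)^2)) + (M+1)^2 * d
      = d * ((4*(r.natAbs:ℝ)+1) * (M+1)^2) := by ring
  calc |(∑ j ∈ Finset.range N,
          (d * (ψ (midpt x1 x2 n j) * stepA ψ x1 x2 t n ((j:ℤ) - r))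
            - ∫ u in dyadicPt n j..dyadicPt n (j+1), H u))
        - ∫ u in dyadicPt n N..t, H u|
      ≤ |∑ j ∈ Finset.range N,
          (d * (ψ (midpt x1 x2 n j) * stepA ψ x1 x2 t n ((j:ℤ) - r))
            - ∫ u in dyadicPt n j..dyadicPt n (j+1), H u)|
        + |∫ u in dyadicPt n N..t, H u| := habs_sub _ _
    _ ≤ (∑ j ∈ Finset.range N, |d * (ψ (midpt x1 x2 n j) * stepA ψ x1 x2 t n ((j:ℤ) - r))
            - ∫ u in dyadicPt n j..dyadicPt n (j+1), H u|) + (M+1)^2 * d :=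
        add_le_add (Finset.abs_sum_le_sum_abs _ _) htail
    _ < ε := by linarith only [hmain, hq1, hq2, hhalf, hε]




lemma reindex (ψ : ℝ × ℝ → ℝ) (x1 x2 : ℝ → ℝ) (t : ℝ) (n : ℕ) :
    dstep n * ∑ j ∈ Finset.range (nSteps n t), ∑ k ∈ Finset.range (nSteps n t),
        (ψ (midpt x1 x2 n j) * ψ (midpt x1 x2 n k) * rhoH (1/6) ((j:ℤ) - (k:ℤ)) ^ 3)
    = ∑' r : ℤ, rhoH (1/6) r ^ 3 *
        (dstep n * ∑ j ∈ Finset.range (nSteps n t),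
          ψ (midpt x1 x2 n j) * stepA ψ x1 x2 t n ((j:ℤ) - r)) := by
  set N := nSteps n t with hN
  set a : ℕ → ℝ := fun j => ψ (midpt x1 x2 n j) with ha
  have h0 : ∀ j : ℕ, ∀ r ∉ (Finset.range N).image (fun k : ℕ => (j:ℤ) - k),
      rhoH (1/6) r ^ 3 * (a j * stepA ψ x1 x2 t n ((j:ℤ) - r)) = 0 := by
    intro j r hr
    by_cases hc : 0 ≤ (j:ℤ) - r ∧ (j:ℤ) - r < (N:ℤ)
    · exfalso
      apply hr
      rw [Finset.mem_image]
      exact ⟨((j:ℤ) - r).toNat, Finset.mem_range.2 (by omega), by omega⟩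
    · unfold stepA
      rw [if_neg hc, mul_zero, mul_zero]
  have hsummable : ∀ j ∈ Finset.range N,
      Summable (fun r : ℤ => rhoH (1/6) r ^ 3 * (a j * stepA ψ x1 x2 t n ((j:ℤ) - r))) :=
    fun j _ => summable_of_ne_finset_zero (h0 j)
  have hinner : ∀ j ∈ Finset.range N,
      (∑ k ∈ Finset.range N, a j * a k * rhoH (1/6) ((j:ℤ) - (k:ℤ)) ^ 3)
      = ∑' r : ℤ, rhoH (1/6) r ^ 3 * (a j * stepA ψ x1 x2 t n ((j:ℤ) - r)) := by
    intro j _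
    rw [tsum_eq_sum (h0 j), Finset.sum_image (by intro k _ k' _ h; have h' : (j:ℤ) - k = j - k' := h; omega)]
    refine Finset.sum_congr rfl (fun k hk => ?_)
    rw [Finset.mem_range] at hk
    have h1 : (j:ℤ) - ((j:ℤ) - (k:ℤ)) = (k:ℤ) := by ring
    rw [h1]
    have h2 : stepA ψ x1 x2 t n (k:ℤ) = a k := by
      unfold stepA
      rw [if_pos ⟨Int.natCast_nonneg k, by exact_mod_cast hk⟩, Int.toNat_natCast]
    rw [h2]
    ring
  rw [Finset.sum_congr rfl hinner, ← Summable.tsum_finsetSum hsummable, ← tsum_mul_left]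
  refine tsum_congr (fun r => ?_)
  rw [← Finset.mul_sum]
  ring
theorem conditional_variance_convergence
    (x1 x2 : ℝ → ℝ)
    (hx1 : ContinuousOn x1 (Set.Ici 0)) (hx2 : ContinuousOn x2 (Set.Ici 0))
    (f : ℝ → ℝ → ℝ) (hf : CbSmooth2 f) (t : ℝ) (ht : 0 ≤ t) :
    Tendsto
      (fun n : ℕ =>
        1 / 32 * (2 : ℝ) ^ (-(n : ℝ) / 2) *
          (∑ j ∈ Finset.range (nSteps n t), ∑ k ∈ Finset.range (nSteps n t),
            (pd 1 2 f ((x1 (dyadicPt n (j + 1)) + x1 (dyadicPt n j)) / 2)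
                ((x2 (dyadicPt n (j + 1)) + x2 (dyadicPt n j)) / 2) *
              pd 1 2 f ((x1 (dyadicPt n (k + 1)) + x1 (dyadicPt n k)) / 2)
                ((x2 (dyadicPt n (k + 1)) + x2 (dyadicPt n k)) / 2) *
              rhoH (1 / 6) ((j : ℤ) - (k : ℤ)) ^ 3)))
      atTop
      (nhds (1 / 32 * (∑' r : ℤ, rhoH (1 / 6) r ^ 3) *
        ∫ u in (0 : ℝ)..t, pd 1 2 f (x1 u) (x2 u) ^ 2)) := by
  have hψs : CbSmooth (psi f) := cbSmooth_psi hf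
  obtain ⟨M, hM0, hM⟩ := cbSmooth_bound hψs
  have hψc : Continuous (psi f) := (hψs.1 0).continuous
  have hpd : ∀ x y, pd 1 2 f x y = psi f (x, y) := pd12_eq hf
  set ψ : ℝ × ℝ → ℝ := psi f with hψdef
  set I : ℝ := ∫ u in (0:ℝ)..t, (ψ (x1 u, x2 u)) ^ 2 with hI
  have hstepA_bd : ∀ (n : ℕ) (m : ℤ), |stepA ψ x1 x2 t n m| ≤ M := by
    intro n m
    unfold stepA
    split
    · exact hM _
    · rw [abs_zero]; exact hM0
  have hc_bd : ∀ (n : ℕ) (r : ℤ),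
      |dstep n * ∑ j ∈ Finset.range (nSteps n t),
          ψ (midpt x1 x2 n j) * stepA ψ x1 x2 t n ((j:ℤ) - r)| ≤ M^2 * t := by
    intro n r
    rw [abs_mul, abs_of_pos (dstep_pos n)]
    calc dstep n * |∑ j ∈ Finset.range (nSteps n t),
            ψ (midpt x1 x2 n j) * stepA ψ x1 x2 t n ((j:ℤ) - r)|
        ≤ dstep n * ((nSteps n t : ℝ) * M^2) := by
          apply mul_le_mul_of_nonneg_left _ (dstep_pos n).le
          refine (Finset.abs_sum_le_sum_abs _ _).trans ?_
          have hterm : ∀ j ∈ Finset.range (nSteps n t),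
              |ψ (midpt x1 x2 n j) * stepA ψ x1 x2 t n ((j:ℤ) - r)| ≤ M^2 := by
            intro j _
            rw [abs_mul, sq]
            exact mul_le_mul (hM _) (hstepA_bd n _) (abs_nonneg _) hM0
          refine (Finset.sum_le_sum hterm).trans ?_
          rw [Finset.sum_const, Finset.card_range, nsmul_eq_mul]
      _ = ((nSteps n t : ℝ) * dstep n) * M^2 := by ring
      _ ≤ t * M^2 := mul_le_mul_of_nonneg_right (nSteps_mul_le n ht) (by positivity)
      _ = M^2 * t := by ring
  have hlim : Tendsto (fun n : ℕ => ∑' r : ℤ, rhoH (1/6) r ^ 3 *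
      (dstep n * ∑ j ∈ Finset.range (nSteps n t),
        ψ (midpt x1 x2 n j) * stepA ψ x1 x2 t n ((j:ℤ) - r)))
      atTop (𝓝 (∑' r : ℤ, rhoH (1/6) r ^ 3 * I)) := by
    apply tendsto_tsum_of_dominated_convergence
      (bound := fun r : ℤ => |rhoH (1/6) r| ^ 3 * (M^2 * t))
    · exact summable_rho_cube_abs.mul_right _
    · intro r
      exact (pointwise_conv ψ hψc M hM x1 x2 hx1 hx2 t ht r).const_mul _
    · refine Filter.Eventually.of_forall (fun n r => ?_)
      rw [Real.norm_eq_abs, abs_mul, abs_pow]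
      exact mul_le_mul_of_nonneg_left (hc_bd n r) (by positivity)
  have hIeq : (∫ u in (0:ℝ)..t, pd 1 2 f (x1 u) (x2 u) ^ 2) = I := by
    rw [hI]
    refine intervalIntegral.integral_congr (fun u _ => ?_)
    rw [hpd]
  rw [show (1:ℝ) / 32 * (∑' r : ℤ, rhoH (1 / 6) r ^ 3) *
      (∫ u in (0 : ℝ)..t, pd 1 2 f (x1 u) (x2 u) ^ 2)
      = 1 / 32 * ∑' r : ℤ, rhoH (1/6) r ^ 3 * I from by
    rw [hIeq, mul_assoc, ← tsum_mul_right]]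
  refine Tendsto.congr (fun n => ?_) (hlim.const_mul (1/32 : ℝ))
  rw [← reindex ψ x1 x2 t n, ← mul_assoc]
  unfold dstep
  congr 1
  refine Finset.sum_congr rfl (fun j _ => Finset.sum_congr rfl (fun k _ => ?_))
  rw [hpd, hpd]
  rfl

end
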